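/- Let n_q, n_c, m, n_yq, n_yc be natural numbers with n = 2n_q + n_c, n_y = 2n_yq + n_yc. Let Θ_n = diag(diag_{n_q}(J), 0_{n_c×n_c}), Θ_q = diag_{n_q}(J), Θ_w = diag_m(J), Θ_yq = diag_{n_yq}(J). Let A = [[A_qq, A_qc],[A_cq, A_cc]] (n×n), B = [B_q; B_c] (n×2m), C = [[C_qq, C_qc],[C_cq, C_cc]] (n_y×n), D = [D_q; D_c] (n_y×2m) be real matrices partitioned so that A_qq is 2n_q×2n_q, B_q is 2n_q×2m, C_qq is 2n_yq×2n_q, D_q is 2n_yq×2m. Then the three conditions (1) A·Θ_n + Θ_n·Aᵀ + B·Θ_w·Bᵀ = 0, (2) B·Θ_w·Dᵀ = −Θ_n·Cᵀ, (3) D·Θ_w·Dᵀ = diag(Θ_yq, 0_{n_yc×n_yc}) hold if and only if all of the following ten equations hold: D_q·Θ_w·D_qᵀ = Θ_yq, D_q·Θ_w·D_cᵀ = 0, D_c·Θ_w·D_cᵀ = 0, A_qq·Θ_q + Θ_q·A_qqᵀ + B_q·Θ_w·B_qᵀ = 0, A_cq·Θ_q + B_c·Θ_w·B_qᵀ = 0,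 B_c·Θ_w·B_cᵀ = 0, B_c·Θ_w·D_qᵀ = 0, B_q·Θ_w·D_qᵀ = −Θ_q·C_qqᵀ, B_c·Θ_w·D_cᵀ = 0, and B_q·Θ_w·D_cᵀ = −Θ_q·C_cqᵀ. -/

import Mathlib

open Matrix

/-- The 2×2 real matrix `J = [[0,1],[-1,0]]`. -/
def Jmat : Matrix (Fin 2) (Fin 2) ℝ := !![0, 1; -1, 0]

/-- `diagJ k` is the `2k × 2k` block-diagonal real matrix with `k` copies of `J`. -/
def diagJ (k : ℕ) : Matrix (Fin (2 * k)) (Fin (2 * k)) ℝ :=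
  Matrix.of fun i j =>
    if i.val / 2 = j.val / 2 then
      Jmat ⟨i.val % 2, Nat.mod_lt _ two_pos⟩ ⟨j.val % 2, Nat.mod_lt _ two_pos⟩
    else 0

lemma diagJ_transpose (k : ℕ) : (diagJ k)ᵀ = -(diagJ k) := by
  ext i j
  simp only [transpose_apply, diagJ, of_apply, Matrix.neg_apply]
  rcases eq_or_ne (i.val / 2) (j.val / 2) with h | h
  · rw [if_pos h.symm, if_pos h]
    rcases Nat.mod_two_eq_zero_or_one i.val with hi | hi <;>
      rcases Nat.mod_two_eq_zero_or_one j.val with hj | hj <;>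
      simp [hi, hj, Jmat]
  · rw [if_neg (Ne.symm h), if_neg h, neg_zero]

lemma skew_flip {p q m : ℕ} (X : Matrix (Fin p) (Fin (2 * m)) ℝ)
    (Y : Matrix (Fin q) (Fin (2 * m)) ℝ) (h : X * diagJ m * Yᵀ = 0) :
    Y * diagJ m * Xᵀ = 0 := by
  have := congrArg Matrix.transpose h
  simp only [Matrix.transpose_mul, Matrix.transpose_transpose, diagJ_transpose,
    Matrix.transpose_zero, Matrix.mul_neg, Matrix.neg_mul, Matrix.mul_assoc,
    neg_eq_zero] at this
  rw [Matrix.mul_assoc]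
  exact this

lemma qc_of_cq {n_q n_c m : ℕ}
    (Acq : Matrix (Fin n_c) (Fin (2 * n_q)) ℝ)
    (Bq : Matrix (Fin (2 * n_q)) (Fin (2 * m)) ℝ)
    (Bc : Matrix (Fin n_c) (Fin (2 * m)) ℝ)
    (h : Acq * diagJ n_q + Bc * diagJ m * Bqᵀ = 0) :
    diagJ n_q * Acqᵀ + Bq * diagJ m * Bcᵀ = 0 := by
  have := congrArg (fun M => -Mᵀ) h
  simp only [Matrix.transpose_add, Matrix.transpose_mul, Matrix.transpose_transpose,
    diagJ_transpose, Matrix.transpose_zero, Matrix.mul_neg, Matrix.neg_mul,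
    neg_add, neg_neg, neg_zero, Matrix.mul_assoc] at this
  rw [Matrix.mul_assoc]
  exact this

lemma cq_of_qc {n_q n_c m : ℕ}
    (Acq : Matrix (Fin n_c) (Fin (2 * n_q)) ℝ)
    (Bq : Matrix (Fin (2 * n_q)) (Fin (2 * m)) ℝ)
    (Bc : Matrix (Fin n_c) (Fin (2 * m)) ℝ)
    (h : diagJ n_q * Acqᵀ + Bq * diagJ m * Bcᵀ = 0) :
    Acq * diagJ n_q + Bc * diagJ m * Bqᵀ = 0 := by
  have := congrArg (fun M => -Mᵀ) h
  simp only [Matrix.transpose_add, Matrix.transpose_mul, Matrix.transpose_transpose,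
    diagJ_transpose, Matrix.transpose_zero, Matrix.mul_neg, Matrix.neg_mul,
    neg_add, neg_neg, neg_zero, Matrix.mul_assoc] at this
  rw [Matrix.mul_assoc]
  exact this

/-- The physical realizability constraints of a standard-form mixed quantum-classical linear
stochastic system are equivalent to the ten block equations. -/
theorem realizability_block_equations (n_q n_c m n_yq n_yc : ℕ)
    (Aqq : Matrix (Fin (2 * n_q)) (Fin (2 * n_q)) ℝ)
    (Aqc : Matrix (Fin (2 * n_q)) (Fin n_c) ℝ)
    (Acq : Matrix (Fin n_c) (Fin (2 * n_q)) ℝ)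
    (Acc : Matrix (Fin n_c) (Fin n_c) ℝ)
    (Bq : Matrix (Fin (2 * n_q)) (Fin (2 * m)) ℝ)
    (Bc : Matrix (Fin n_c) (Fin (2 * m)) ℝ)
    (Cqq : Matrix (Fin (2 * n_yq)) (Fin (2 * n_q)) ℝ)
    (Cqc : Matrix (Fin (2 * n_yq)) (Fin n_c) ℝ)
    (Ccq : Matrix (Fin n_yc) (Fin (2 * n_q)) ℝ)
    (Ccc : Matrix (Fin n_yc) (Fin n_c) ℝ)
    (Dq : Matrix (Fin (2 * n_yq)) (Fin (2 * m)) ℝ)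
    (Dc : Matrix (Fin n_yc) (Fin (2 * m)) ℝ) :
    (Matrix.fromBlocks Aqq Aqc Acq Acc * Matrix.fromBlocks (diagJ n_q) 0 0 0 +
        Matrix.fromBlocks (diagJ n_q) 0 0 0 * (Matrix.fromBlocks Aqq Aqc Acq Acc)ᵀ +
        Matrix.fromRows Bq Bc * diagJ m * (Matrix.fromRows Bq Bc)ᵀ = 0 ∧
      Matrix.fromRows Bq Bc * diagJ m * (Matrix.fromRows Dq Dc)ᵀ =
        -(Matrix.fromBlocks (diagJ n_q) 0 0 0 * (Matrix.fromBlocks Cqq Cqc Ccq Ccc)ᵀ) ∧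
      Matrix.fromRows Dq Dc * diagJ m * (Matrix.fromRows Dq Dc)ᵀ =
        Matrix.fromBlocks (diagJ n_yq) 0 0 0) ↔
    (Dq * diagJ m * Dqᵀ = diagJ n_yq ∧
      Dq * diagJ m * Dcᵀ = 0 ∧
      Dc * diagJ m * Dcᵀ = 0 ∧
      Aqq * diagJ n_q + diagJ n_q * Aqqᵀ + Bq * diagJ m * Bqᵀ = 0 ∧
      Acq * diagJ n_q + Bc * diagJ m * Bqᵀ = 0 ∧
      Bc * diagJ m * Bcᵀ = 0 ∧
      Bc * diagJ m * Dqᵀ = 0 ∧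
      Bq * diagJ m * Dqᵀ = -(diagJ n_q * Cqqᵀ) ∧
      Bc * diagJ m * Dcᵀ = 0 ∧
      Bq * diagJ m * Dcᵀ = -(diagJ n_q * Ccqᵀ)) := by
  have h0 : (0 : Matrix (Fin (2 * n_q) ⊕ Fin n_c) (Fin (2 * n_q) ⊕ Fin n_c) ℝ) =
      Matrix.fromBlocks 0 0 0 0 := (Matrix.fromBlocks_zero).symm
  rw [h0]
  change (_ ∧ _ = -(@HMul.hMul _ _ (Matrix (Fin (2 * n_q) ⊕ Fin n_c) (Fin (2 * n_yq) ⊕ Fin n_yc) ℝ) Matrix.instHMulOfFintypeOfMulOfAddCommMonoid (Matrix.fromBlocks (diagJ n_q) 0 0 0) (Matrix.fromBlocks Cqq Cqc Ccq Ccc)ᵀ) ∧ _) ↔ _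
  simp only [Matrix.fromRows_mul, Matrix.transpose_fromRows, Matrix.fromRows_mul_fromCols,
    Matrix.fromBlocks_transpose, Matrix.fromBlocks_multiply, Matrix.fromBlocks_add,
    Matrix.fromBlocks_neg, Matrix.mul_fromCols, Matrix.fromRows_fromCols_eq_fromBlocks, Matrix.fromCols_fromRows_eq_fromBlocks,
    Matrix.mul_zero, Matrix.zero_mul, add_zero, zero_add,
    neg_zero, Matrix.fromBlocks_inj]
  constructor
  · rintro ⟨⟨h1, h2, h3, h4⟩, ⟨h5, h6, h7, h8⟩, ⟨h9, h10, h11, h12⟩⟩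
    exact ⟨h9, h10, h12, h1, h3, h4, h7, h5, h8, h6⟩
  · rintro ⟨h1, h2, h3, h4, h5, h6, h7, h8, h9, h10⟩
    exact ⟨⟨h4, qc_of_cq _ _ _ h5, h5, h6⟩, ⟨h8, h10, h7, h9⟩,
      ⟨h1, h2, skew_flip _ _ h2, h3⟩⟩
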